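/- If Z₊(X_G) = Z(X_G) ∩ Q₊(X_G), then Z₊(A_G) = Z(A_G) ∩ Q₊(A_G). That is, normality of the homogenized cut vector configuration implies that the cut vectors form a Hilbert basis. -/
import Mathlib


open Finset

variable {V : Type} [DecidableEq V]

def cutFun (S : Finset V) : Sym2 V → ℤ :=
  Sym2.lift ⟨fun i j => |(if i ∈ S then (1 : ℤ) else 0) - (if j ∈ S then (1 : ℤ) else 0)|,
    fun i j => abs_sub_comm _ _⟩

def zSpan {ι : Type} (B : Set (ι → ℤ)) : Set (ι → ℤ) :=
  {x | ∃ (s : Finset (ι → ℤ)) (c : (ι → ℤ) → ℤ), ↑s ⊆ B ∧ x = ∑ b ∈ s, c b • b}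

def zPlus {ι : Type} (B : Set (ι → ℤ)) : Set (ι → ℤ) :=
  {x | ∃ (s : Finset (ι → ℤ)) (c : (ι → ℤ) → ℤ), ↑s ⊆ B ∧ (∀ b ∈ s, 0 ≤ c b) ∧
    x = ∑ b ∈ s, c b • b}

def toQ {ι : Type} (x : ι → ℤ) : ι → ℚ := fun i => (x i : ℚ)

def qPlus {ι : Type} (B : Set (ι → ℤ)) : Set (ι → ℚ) :=
  {x | ∃ (s : Finset (ι → ℤ)) (c : (ι → ℤ) → ℚ), ↑s ⊆ B ∧ (∀ b ∈ s, 0 ≤ c b) ∧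
    x = ∑ b ∈ s, c b • toQ b}

def AG (G : SimpleGraph V) : Set (↥G.edgeSet → ℤ) :=
  {x | ∃ S : Finset V, x = fun e => cutFun S e.1}

def XG (G : SimpleGraph V) : Set (Option ↥G.edgeSet → ℤ) :=
  {x | ∃ S : Finset V, x = fun o => Option.elim o 1 (fun e => cutFun S e.1)}

def IsNormal (G : SimpleGraph V) : Prop :=
  zPlus (XG G) = zSpan (XG G) ∩ toQ ⁻¹' qPlus (XG G)

def IsMinor {W : Type} (H : SimpleGraph W) (G : SimpleGraph V) : Prop :=
  ∃ f : W → Set V,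
    (∀ w, (G.induce (f w)).Connected) ∧
    (Pairwise fun w₁ w₂ => Disjoint (f w₁) (f w₂)) ∧
    (∀ w₁ w₂, H.Adj w₁ w₂ → ∃ a ∈ f w₁, ∃ b ∈ f w₂, G.Adj a b)

open Classical in
noncomputable def extZ {G : SimpleGraph V} (x : ↥G.edgeSet → ℤ) : Sym2 V → ℤ :=
  fun e => if h : e ∈ G.edgeSet then x ⟨e, h⟩ else 0

open Classical in
noncomputable def extQ {G : SimpleGraph V} (x : ↥G.edgeSet → ℚ) : Sym2 V → ℚ :=
  fun e => if h : e ∈ G.edgeSet then x ⟨e, h⟩ else 0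

-- auxiliary
def liftV {ι : Type} (b : ι → ℤ) : Option ι → ℤ := fun o => o.elim 1 b

lemma liftV_inj {ι : Type} : Function.Injective (liftV (ι := ι)) :=
  fun a b h => funext fun e => congrFun h (some e)

lemma XG_eq (G : SimpleGraph V) : XG G = liftV '' AG G := by
  ext y
  constructor
  · rintro ⟨S, rfl⟩; exact ⟨_, ⟨S, rfl⟩, rfl⟩
  · rintro ⟨b, ⟨S, rfl⟩, rfl⟩; exact ⟨S, rfl⟩

lemma zero_mem_AG (G : SimpleGraph V) : (0 : ↥G.edgeSet → ℤ) ∈ AG G := by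
  refine ⟨∅, ?_⟩
  funext e
  have : ∀ p : Sym2 V, cutFun (∅ : Finset V) p = 0 := by
    intro p
    induction p using Sym2.ind with
    | _ i j => simp [cutFun]
  simp [this]

lemma toQ_sum {ι : Type} (s : Finset (ι → ℤ)) (c : (ι → ℤ) → ℤ) :
    toQ (∑ b ∈ s, c b • b) = ∑ b ∈ s, ((c b : ℚ)) • toQ b := by
  funext i
  simp only [toQ, Finset.sum_apply, Pi.smul_apply, smul_eq_mul]
  push_cast
  rfl

lemma lemA {ι : Type} {B : Set (ι → ℤ)} (h0 : (0 : ι → ℤ) ∈ B) {x : ι → ℤ}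
    (hx : x ∈ zSpan B) (m : ℤ) :
    (fun o => Option.elim o m x) ∈ zSpan (liftV '' B) := by
  classical
  obtain ⟨s, c, hs, rfl⟩ := hx
  set M : ℤ := ∑ b ∈ s, c b with hM
  refine ⟨insert (liftV 0) (s.image liftV),
    fun b => (if b = liftV 0 then m - M else 0) +
      (if (fun e => b (some e)) ∈ s then c (fun e => b (some e)) else 0), ?_, ?_⟩
  · intro b hb
    simp only [coe_insert, coe_image, Set.mem_insert_iff, Set.mem_image] at hb
    rcases hb with rfl | ⟨a, ha, rfl⟩
    · exact ⟨0, h0, rfl⟩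
    · exact ⟨a, hs ha, rfl⟩
  · funext o
    rw [Finset.sum_apply]
    simp only [Pi.smul_apply, smul_eq_mul, add_mul]
    rw [Finset.sum_add_distrib]
    have h1 : ∑ b ∈ insert (liftV 0) (s.image liftV),
        (if b = liftV 0 then m - M else 0) * b o = (m - M) * liftV 0 o := by
      rw [Finset.sum_eq_single (liftV 0)]
      · simp
      · intro b _ hb; simp [hb]
      · intro hmem; exact absurd (Finset.mem_insert_self _ _) hmem
    have h2 : ∑ b ∈ insert (liftV 0) (s.image liftV),
        (if (fun e => b (some e)) ∈ s then c (fun e => b (some e)) else 0) * b o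
        = ∑ b ∈ s, c b * liftV b o := by
      rw [← Finset.sum_subset (Finset.subset_insert _ _)]
      · rw [Finset.sum_image (fun a _ b _ hab => liftV_inj hab)]
        refine Finset.sum_congr rfl ?_
        intro b hb
        have : (fun e => liftV b (some e)) = b := rfl
        rw [this, if_pos hb]
      · intro b hb hnb
        have : b = liftV 0 := by
          rcases Finset.mem_insert.mp hb with h' | h'
          · exact h'
          · exact absurd h' hnb
        subst this
        have : (fun e => liftV (0 : ι → ℤ) (some e)) = (0 : ι → ℤ) := rfl
        rw [this]
        by_cases h0s : (0 : ι → ℤ) ∈ s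
        · exact absurd (Finset.mem_image_of_mem liftV h0s) hnb
        · simp [h0s]
    rw [h1, h2]
    cases o with
    | none => simp [liftV, hM, Finset.sum_apply]
    | some e =>
      simp only [liftV, Option.elim, Finset.sum_apply, Pi.smul_apply, smul_eq_mul]
      ring_nf
      simp

lemma lemB {ι : Type} {B : Set (ι → ℤ)} (h0 : (0 : ι → ℤ) ∈ B) {y : ι → ℚ}
    (hy : y ∈ qPlus B) :
    ∃ T : ℚ, 0 ≤ T ∧ ∀ m : ℚ, T ≤ m →
      (fun o => Option.elim o m y) ∈ qPlus (liftV '' B) := by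
  classical
  obtain ⟨t, d, ht, hd, rfl⟩ := hy
  refine ⟨∑ b ∈ t, d b, Finset.sum_nonneg hd, ?_⟩
  intro m hm
  set T : ℚ := ∑ b ∈ t, d b with hT
  refine ⟨insert (liftV 0) (t.image liftV),
    fun b => (if b = liftV 0 then m - T else 0) +
      (if (fun e => b (some e)) ∈ t then d (fun e => b (some e)) else 0), ?_, ?_, ?_⟩
  · intro b hb
    simp only [coe_insert, coe_image, Set.mem_insert_iff, Set.mem_image] at hb
    rcases hb with rfl | ⟨a, ha, rfl⟩
    · exact ⟨0, h0, rfl⟩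
    · exact ⟨a, ht ha, rfl⟩
  · intro b _
    have h1 : (0:ℚ) ≤ (if b = liftV 0 then m - T else 0) := by
      split
      · linarith
      · exact le_rfl
    have h2 : (0:ℚ) ≤ (if (fun e => b (some e)) ∈ t then d (fun e => b (some e)) else 0) := by
      split
      · exact hd _ (by assumption)
      · exact le_rfl
    exact add_nonneg h1 h2
  · funext o
    rw [Finset.sum_apply]
    simp only [Pi.smul_apply, smul_eq_mul, add_mul]
    rw [Finset.sum_add_distrib]
    have h1 : ∑ b ∈ insert (liftV 0) (t.image liftV),
        (if b = liftV 0 then m - T else 0) * toQ b o = (m - T) * toQ (liftV 0) o := by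
      rw [Finset.sum_eq_single (liftV 0)]
      · simp
      · intro b _ hb; simp [hb]
      · intro hmem; exact absurd (Finset.mem_insert_self _ _) hmem
    have h2 : ∑ b ∈ insert (liftV 0) (t.image liftV),
        (if (fun e => b (some e)) ∈ t then d (fun e => b (some e)) else 0) * toQ b o
        = ∑ b ∈ t, d b * toQ (liftV b) o := by
      rw [← Finset.sum_subset (Finset.subset_insert _ _)]
      · rw [Finset.sum_image (fun a _ b _ hab => liftV_inj hab)]
        refine Finset.sum_congr rfl ?_
        intro b hb
        have : (fun e => liftV b (some e)) = b := rfl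
        rw [this, if_pos hb]
      · intro b hb hnb
        have : b = liftV 0 := by
          rcases Finset.mem_insert.mp hb with h' | h'
          · exact h'
          · exact absurd h' hnb
        subst this
        have : (fun e => liftV (0 : ι → ℤ) (some e)) = (0 : ι → ℤ) := rfl
        rw [this]
        by_cases h0t : (0 : ι → ℤ) ∈ t
        · exact absurd (Finset.mem_image_of_mem liftV h0t) hnb
        · simp [h0t]
    rw [h1, h2]
    cases o with
    | none => simp [liftV, toQ, hT]
    | some e => simp [liftV, toQ, Finset.sum_apply]

lemma lemC {ι : Type} {B : Set (ι → ℤ)} {y : Option ι → ℤ}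
    (hy : y ∈ zPlus (liftV '' B)) : (fun e => y (some e)) ∈ zPlus B := by
  classical
  obtain ⟨u, c, hu, hc, rfl⟩ := hy
  have key : ∀ b ∈ u, liftV (fun e => b (some e)) = b := by
    intro b hb
    obtain ⟨a, _, rfl⟩ := hu hb
    rfl
  refine ⟨u.image (fun b e => b (some e)), fun b => c (liftV b), ?_, ?_, ?_⟩
  · intro b hb
    simp only [coe_image, Set.mem_image, Finset.mem_coe] at hb
    obtain ⟨a, ha, rfl⟩ := hb
    obtain ⟨a0, ha0, rfl⟩ := hu ha
    exact ha0
  · intro b hb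
    simp only [Finset.mem_image] at hb
    obtain ⟨a, ha, rfl⟩ := hb
    show 0 ≤ c (liftV fun e => a (some e))
    rw [key a ha]
    exact hc a ha
  · rw [Finset.sum_image (fun a ha b hb hab => by
      rw [← key a ha, ← key b hb, hab])]
    funext e
    simp only [Finset.sum_apply, Pi.smul_apply, smul_eq_mul]
    refine Finset.sum_congr rfl ?_
    intro b hb
    rw [key b hb]

theorem stmt0 (G : SimpleGraph V)
    (h : zPlus (XG G) = zSpan (XG G) ∩ toQ ⁻¹' qPlus (XG G)) :
    zPlus (AG G) = zSpan (AG G) ∩ toQ ⁻¹' qPlus (AG G) := by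
  ext x
  constructor
  · rintro ⟨s, c, hs, hc, rfl⟩
    constructor
    · exact ⟨s, c, hs, rfl⟩
    · refine ⟨s, fun b => (c b : ℚ), hs, fun b hb => by show (0:ℚ) ≤ (c b : ℚ); exact_mod_cast hc b hb, ?_⟩
      exact toQ_sum s c
  · rintro ⟨hspan, hq⟩
    obtain ⟨T, hT0, hTm⟩ := lemB (zero_mem_AG G) hq
    set m : ℤ := ⌈T⌉ with hm
    have hy1 : (fun o => Option.elim o m x) ∈ zSpan (XG G) := by
      rw [XG_eq]
      exact lemA (zero_mem_AG G) hspan m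
    have hy2 : toQ (fun o => Option.elim o m x) ∈ qPlus (XG G) := by
      rw [XG_eq]
      have := hTm (m : ℚ) (le_trans (Int.le_ceil T) (by rw [hm]))
      have heq : toQ (fun o => Option.elim o m x) = fun o => Option.elim o (m : ℚ) (toQ x) := by
        funext o
        cases o <;> rfl
      rw [heq]
      exact this
    have hy : (fun o => Option.elim o m x) ∈ zPlus (XG G) := by
      rw [h]
      exact ⟨hy1, hy2⟩
    rw [XG_eq] at hy
    have := lemC hy
    exact this
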